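/- arXiv:1401.7860 — 5 statements merged into one kernel-verified Lean document; each statement's English description precedes it below -/
import Mathlib

section
/- Suppose L is generic, satisfies the triangle inequality, and s₂ + s₃ > (l_1 + … + l_n)/2. Then for every vertex (I, J, K) of Γ(L), there is no path in Γ(L) from (I, J, K) to its mirror image (J, I, K); that is, a vertex and its mirror image lie in different connected components of Γ(L). -/
set_option maxHeartbeats 1600000


open Finset

/-- `I ⊆ [n]` is *short*: the sum of its lengths is less than that of its complement. -/
def ShortSet {n : ℕ} (L : Fin n → ℝ) (I : Finset (Fin n)) : Prop :=
  ∑ i ∈ I, L i < ∑ i ∈ Iᶜ, L i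

/-- `I ⊆ [n]` is *long*: the sum of its lengths is greater than that of its complement. -/
def LongSet {n : ℕ} (L : Fin n → ℝ) (I : Finset (Fin n)) : Prop :=
  ∑ i ∈ Iᶜ, L i < ∑ i ∈ I, L i

/-- The length vector `L` is *generic*. -/
def GenericVec {n : ℕ} (L : Fin n → ℝ) : Prop :=
  ∀ I : Finset (Fin n), ∑ i ∈ I, L i ≠ ∑ i ∈ Iᶜ, L i

/-- `L` satisfies the triangle inequality: every singleton is short. -/
def TriangleIneq {n : ℕ} (L : Fin n → ℝ) : Prop :=
  ∀ i : Fin n, ShortSet L {i}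

/-- Ordered triples of subsets of `[n]`. -/
abbrev LTriple (n : ℕ) := Finset (Fin n) × Finset (Fin n) × Finset (Fin n)

/-- An ordered triple `(I, J, K)` representing a vertex of `Γ(L)`: three pairwise
disjoint nonempty short sets whose union is `[n]`. -/
def IsVertex {n : ℕ} (L : Fin n → ℝ) (V : LTriple n) : Prop :=
  V.1.Nonempty ∧ V.2.1.Nonempty ∧ V.2.2.Nonempty ∧
  ShortSet L V.1 ∧ ShortSet L V.2.1 ∧ ShortSet L V.2.2 ∧
  Disjoint V.1 V.2.1 ∧ Disjoint V.1 V.2.2 ∧ Disjoint V.2.1 V.2.2 ∧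
  V.1 ∪ V.2.1 ∪ V.2.2 = Finset.univ

/-- Cyclic rotation of an ordered triple. -/
def rotT {n : ℕ} (V : LTriple n) : LTriple n := (V.2.1, V.2.2, V.1)

/-- Two ordered triples represent the same cyclically ordered partition
(`(I,J,K)`, `(J,K,I)` and `(K,I,J)` are identified). -/
def CyclEq {n : ℕ} (V W : LTriple n) : Prop :=
  W = V ∨ W = rotT V ∨ W = rotT (rotT V)

/-- The mirror image of the vertex `(I, J, K)` is the vertex `(J, I, K)`. -/
def mirrorT {n : ℕ} (V : LTriple n) : LTriple n := (V.2.1, V.1, V.2.2)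

/-- The elementary move on representatives: shift a nonempty proper subset
`S ⊊ I` to the second part, provided `J ∪ S` stays short. -/
def MoveStep {n : ℕ} (L : Fin n → ℝ) (V W : LTriple n) : Prop :=
  ∃ S : Finset (Fin n), S.Nonempty ∧ S ⊂ V.1 ∧ ShortSet L (V.2.1 ∪ S) ∧
    W = (V.1 \ S, V.2.1 ∪ S, V.2.2)

/-- Adjacency in `Γ(L)`: one of the two vertices has a representative from which an
elementary move leads to a representative of the other. -/
def GammaAdj {n : ℕ} (L : Fin n → ℝ) (V W : LTriple n) : Prop :=
  (∃ V' W' : LTriple n, CyclEq V V' ∧ MoveStep L V' W' ∧ CyclEq W W') ∨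
  (∃ W' V' : LTriple n, CyclEq W W' ∧ MoveStep L W' V' ∧ CyclEq V V')

/-- There is a path of length `m` (i.e. with `m` consecutive edges) in `Γ(L)`
from the vertex `V` to the vertex `W`. -/
def GammaPath {n : ℕ} (L : Fin n → ℝ) (m : ℕ) (V W : LTriple n) : Prop :=
  ∃ f : ℕ → LTriple n, CyclEq V (f 0) ∧ CyclEq W (f m) ∧
    (∀ i ≤ m, IsVertex L (f i)) ∧ ∀ i < m, GammaAdj L (f i) (f (i + 1))

/-- The list of lengths sorted in nonincreasing order. -/
noncomputable def sortedDesc {n : ℕ} (L : Fin n → ℝ) : List ℝ :=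
  List.insertionSort (· ≥ ·) (List.ofFn L)

/-- The second largest length (with multiplicity). -/
noncomputable def s2 {n : ℕ} (L : Fin n → ℝ) : ℝ := (sortedDesc L).getD 1 0

/-- The third largest length (with multiplicity). -/
noncomputable def s3 {n : ℕ} (L : Fin n → ℝ) : ℝ := (sortedDesc L).getD 2 0

lemma short_lt_half {n : ℕ} {L : Fin n → ℝ} {I : Finset (Fin n)} (hI : ShortSet L I) :
    ∑ i ∈ I, L i < (∑ i, L i) / 2 := by
  have h := Finset.sum_add_sum_compl I L
  unfold ShortSet at hI
  linarith

lemma pair_not_short {n : ℕ} {L : Fin n → ℝ} (hpos : ∀ i, 0 < L i) {x y : Fin n}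
    (hxy : x ≠ y) (hT : (∑ i, L i) / 2 < L x + L y) {I : Finset (Fin n)}
    (hI : ShortSet L I) (hx : x ∈ I) (hy : y ∈ I) : False := by
  have hsub : ({x, y} : Finset (Fin n)) ⊆ I := by
    intro z hz
    rcases Finset.mem_insert.mp hz with rfl | hz
    · exact hx
    · rw [Finset.mem_singleton.mp hz]; exact hy
  have h2 : L x + L y ≤ ∑ i ∈ I, L i := by
    rw [← Finset.sum_pair hxy]
    exact Finset.sum_le_sum_of_subset_of_nonneg hsub fun i _ _ => (hpos i).le
  have := short_lt_half hI
  linarith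

lemma isVertex_rot {n : ℕ} {L : Fin n → ℝ} {V : LTriple n} (h : IsVertex L V) :
    IsVertex L (rotT V) := by
  obtain ⟨h1, h2, h3, h4, h5, h6, d12, d13, d23, hu⟩ := h
  refine ⟨h2, h3, h1, h5, h6, h4, d23, d12.symm, d13.symm, ?_⟩
  rw [← hu]
  ext x
  simp only [Finset.mem_union]
  tauto

lemma isVertex_cyclEq {n : ℕ} {L : Fin n → ℝ} {V W : LTriple n} (h : CyclEq V W)
    (hV : IsVertex L V) : IsVertex L W := by
  rcases h with rfl | rfl | rfl
  · exact hV
  · exact isVertex_rot hV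
  · exact isVertex_rot (isVertex_rot hV)

def Ori {n : ℕ} (a b : Fin n) (V : LTriple n) : Prop :=
  (a ∈ V.1 ∧ b ∈ V.2.1) ∨ (a ∈ V.2.1 ∧ b ∈ V.2.2) ∨ (a ∈ V.2.2 ∧ b ∈ V.1)

lemma ori_rot {n : ℕ} {a b : Fin n} {V : LTriple n} : Ori a b (rotT V) ↔ Ori a b V := by
  simp only [Ori, rotT]
  tauto

lemma ori_cyclEq {n : ℕ} {a b : Fin n} {V W : LTriple n} (h : CyclEq V W) :
    Ori a b W ↔ Ori a b V := by
  rcases h with rfl | rfl | rfl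
  · exact Iff.rfl
  · exact ori_rot
  · exact ori_rot.trans ori_rot

lemma mem_three {n : ℕ} {V : LTriple n} (hu : V.1 ∪ V.2.1 ∪ V.2.2 = Finset.univ)
    (x : Fin n) : x ∈ V.1 ∨ x ∈ V.2.1 ∨ x ∈ V.2.2 := by
  have : x ∈ V.1 ∪ V.2.1 ∪ V.2.2 := by rw [hu]; exact Finset.mem_univ x
  simp only [Finset.mem_union] at this
  tauto

lemma mirror_prop {A1 A2 A3 B1 B2 B3 : Prop}
    (ha : A1 ∨ A2 ∨ A3) (hb : B1 ∨ B2 ∨ B3)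
    (ea1 : A1 → ¬ A2) (ea2 : A1 → ¬ A3) (ea3 : A2 → ¬ A3)
    (eb1 : B1 → ¬ B2) (eb2 : B1 → ¬ B3) (eb3 : B2 → ¬ B3)
    (p1 : ¬ (A1 ∧ B1)) (p2 : ¬ (A2 ∧ B2)) (p3 : ¬ (A3 ∧ B3)) :
    ((A2 ∧ B1) ∨ (A1 ∧ B3) ∨ (A3 ∧ B2)) ↔ ¬ ((A1 ∧ B2) ∨ (A2 ∧ B3) ∨ (A3 ∧ B1)) := by
  rcases ha with h1 | h1 | h1 <;> rcases hb with h2 | h2 | h2 <;> tauto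

lemma pigeon_prop {A1 A2 A3 B1 B2 B3 C1 C2 C3 : Prop}
    (ha : A1 ∨ A2 ∨ A3) (hb : B1 ∨ B2 ∨ B3) (hc : C1 ∨ C2 ∨ C3)
    (p1ab : ¬ (A1 ∧ B1)) (p1ac : ¬ (A1 ∧ C1)) (p1bc : ¬ (B1 ∧ C1))
    (p3ab : ¬ (A3 ∧ B3)) (p3ac : ¬ (A3 ∧ C3)) (p3bc : ¬ (B3 ∧ C3)) :
    A2 ∨ B2 ∨ C2 := by
  rcases ha with h1 | h1 | h1 <;> rcases hb with h2 | h2 | h2 <;>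
    rcases hc with h3 | h3 | h3 <;> tauto

lemma ori_mirror {n : ℕ} {L : Fin n → ℝ} (hpos : ∀ i, 0 < L i) {a b : Fin n}
    (hab : a ≠ b) (hT : (∑ i, L i) / 2 < L a + L b) {V : LTriple n}
    (hV : IsVertex L V) : Ori a b (mirrorT V) ↔ ¬ Ori a b V := by
  obtain ⟨-, -, -, s1, s2, s3, d12, d13, d23, hu⟩ := hV
  have ha := mem_three hu a
  have hb := mem_three hu b
  have ea1 : a ∈ V.1 → a ∉ V.2.1 := fun h => Finset.disjoint_left.mp d12 h
  have ea2 : a ∈ V.1 → a ∉ V.2.2 := fun h => Finset.disjoint_left.mp d13 h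
  have ea3 : a ∈ V.2.1 → a ∉ V.2.2 := fun h => Finset.disjoint_left.mp d23 h
  have eb1 : b ∈ V.1 → b ∉ V.2.1 := fun h => Finset.disjoint_left.mp d12 h
  have eb2 : b ∈ V.1 → b ∉ V.2.2 := fun h => Finset.disjoint_left.mp d13 h
  have eb3 : b ∈ V.2.1 → b ∉ V.2.2 := fun h => Finset.disjoint_left.mp d23 h
  have p1 : ¬ (a ∈ V.1 ∧ b ∈ V.1) := fun h => pair_not_short hpos hab hT s1 h.1 h.2
  have p2 : ¬ (a ∈ V.2.1 ∧ b ∈ V.2.1) := fun h => pair_not_short hpos hab hT s2 h.1 h.2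
  have p3 : ¬ (a ∈ V.2.2 ∧ b ∈ V.2.2) := fun h => pair_not_short hpos hab hT s3 h.1 h.2
  simp only [Ori, mirrorT]
  exact mirror_prop ha hb (fun h => ea1 h) (fun h => ea2 h) (fun h => ea3 h)
    (fun h => eb1 h) (fun h => eb2 h) (fun h => eb3 h) p1 p2 p3

lemma top_in_mid {n : ℕ} {L : Fin n → ℝ} (hpos : ∀ i, 0 < L i) {a b c : Fin n}
    (hab : a ≠ b) (hac : a ≠ c) (hbc : b ≠ c)
    (hTab : (∑ i, L i) / 2 < L a + L b) (hTac : (∑ i, L i) / 2 < L a + L c)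
    (hTbc : (∑ i, L i) / 2 < L b + L c) {V : LTriple n} (hV : IsVertex L V) :
    a ∈ V.2.1 ∨ b ∈ V.2.1 ∨ c ∈ V.2.1 := by
  obtain ⟨-, -, -, s1, -, s3, -, -, -, hu⟩ := hV
  have ha := mem_three hu a
  have hb := mem_three hu b
  have hc := mem_three hu c
  have p1ab : ¬ (a ∈ V.1 ∧ b ∈ V.1) := fun h => pair_not_short hpos hab hTab s1 h.1 h.2
  have p1ac : ¬ (a ∈ V.1 ∧ c ∈ V.1) := fun h => pair_not_short hpos hac hTac s1 h.1 h.2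
  have p1bc : ¬ (b ∈ V.1 ∧ c ∈ V.1) := fun h => pair_not_short hpos hbc hTbc s1 h.1 h.2
  have p3ab : ¬ (a ∈ V.2.2 ∧ b ∈ V.2.2) := fun h => pair_not_short hpos hab hTab s3 h.1 h.2
  have p3ac : ¬ (a ∈ V.2.2 ∧ c ∈ V.2.2) := fun h => pair_not_short hpos hac hTac s3 h.1 h.2
  have p3bc : ¬ (b ∈ V.2.2 ∧ c ∈ V.2.2) := fun h => pair_not_short hpos hbc hTbc s3 h.1 h.2
  exact pigeon_prop ha hb hc p1ab p1ac p1bc p3ab p3ac p3bc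

lemma ori_move {n : ℕ} {L : Fin n → ℝ} (hpos : ∀ i, 0 < L i) {a b c : Fin n}
    (hab : a ≠ b) (hac : a ≠ c) (hbc : b ≠ c)
    (hTab : (∑ i, L i) / 2 < L a + L b) (hTac : (∑ i, L i) / 2 < L a + L c)
    (hTbc : (∑ i, L i) / 2 < L b + L c) {V W : LTriple n} (hV : IsVertex L V)
    (hm : MoveStep L V W) : Ori a b W ↔ Ori a b V := by
  obtain ⟨S, hSne, hSI, hshort, rfl⟩ := hm
  have hd12 : Disjoint V.1 V.2.1 := hV.2.2.2.2.2.2.1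
  have hJ := top_in_mid hpos hab hac hbc hTab hTac hTbc hV
  have notS : ∀ x : Fin n, x = a ∨ x = b ∨ x = c → x ∉ S := by
    rintro x hx hmem
    have hxI : x ∈ V.1 := hSI.subset hmem
    have hxJS : x ∈ V.2.1 ∪ S := Finset.mem_union_right _ hmem
    rcases hJ with hy | hy | hy
    · have hya : x ≠ a := fun h => Finset.disjoint_left.mp hd12 (h ▸ hxI) hy
      have hyJS : a ∈ V.2.1 ∪ S := Finset.mem_union_left _ hy
      rcases hx with rfl | rfl | rfl
      · exact hya rfl
      · exact pair_not_short hpos hab hTab hshort hyJS hxJS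
      · exact pair_not_short hpos hac hTac hshort hyJS hxJS
    · have hyb : x ≠ b := fun h => Finset.disjoint_left.mp hd12 (h ▸ hxI) hy
      have hyJS : b ∈ V.2.1 ∪ S := Finset.mem_union_left _ hy
      rcases hx with rfl | rfl | rfl
      · exact pair_not_short hpos hab hTab hshort hxJS hyJS
      · exact hyb rfl
      · exact pair_not_short hpos hbc hTbc hshort hyJS hxJS
    · have hyc : x ≠ c := fun h => Finset.disjoint_left.mp hd12 (h ▸ hxI) hy
      have hyJS : c ∈ V.2.1 ∪ S := Finset.mem_union_left _ hy
      rcases hx with rfl | rfl | rfl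
      · exact pair_not_short hpos hac hTac hshort hxJS hyJS
      · exact pair_not_short hpos hbc hTbc hshort hxJS hyJS
      · exact hyc rfl
  have haS : a ∉ S := notS a (Or.inl rfl)
  have hbS : b ∉ S := notS b (Or.inr (Or.inl rfl))
  simp only [Ori, Finset.mem_sdiff, Finset.mem_union, haS, hbS, and_true, or_false,
    not_false_iff]

lemma ori_adj {n : ℕ} {L : Fin n → ℝ} (hpos : ∀ i, 0 < L i) {a b c : Fin n}
    (hab : a ≠ b) (hac : a ≠ c) (hbc : b ≠ c)
    (hTab : (∑ i, L i) / 2 < L a + L b) (hTac : (∑ i, L i) / 2 < L a + L c)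
    (hTbc : (∑ i, L i) / 2 < L b + L c) {V W : LTriple n} (hV : IsVertex L V)
    (hW : IsVertex L W)
    (hadj : (∃ V' W' : LTriple n, CyclEq V V' ∧ MoveStep L V' W' ∧ CyclEq W W') ∨
      (∃ W' V' : LTriple n, CyclEq W W' ∧ MoveStep L W' V' ∧ CyclEq V V')) :
    Ori a b V ↔ Ori a b W := by
  rcases hadj with ⟨V', W', hVV', hmove, hWW'⟩ | ⟨W', V', hWW', hmove, hVV'⟩
  · have hV' : IsVertex L V' := isVertex_cyclEq hVV' hV
    exact (ori_cyclEq hVV').symm.trans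
      ((ori_move hpos hab hac hbc hTab hTac hTbc hV' hmove).symm.trans (ori_cyclEq hWW'))
  · have hW' : IsVertex L W' := isVertex_cyclEq hWW' hW
    exact (ori_cyclEq hVV').symm.trans
      ((ori_move hpos hab hac hbc hTab hTac hTbc hW' hmove).trans (ori_cyclEq hWW'))

lemma list_three {l : List ℝ} (h : 3 ≤ l.length) :
    ∃ x y z t, l = x :: y :: z :: t := by
  rcases l with _ | ⟨x, _ | ⟨y, _ | ⟨z, t⟩⟩⟩ <;> simp at h
  exact ⟨x, y, z, t, rfl⟩

/-- If `L` is generic, satisfies the triangle inequality, and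
`s₂ + s₃ > (l₁ + ⋯ + lₙ)/2`, then no vertex of `Γ(L)` is joined to its mirror image by
a path in `Γ(L)`: a vertex and its mirror image lie in different connected components. -/
theorem mirror_not_connected (n : ℕ) (hn : 3 ≤ n) (L : Fin n → ℝ)
    (hpos : ∀ i, 0 < L i) (hgen : GenericVec L) (htri : TriangleIneq L)
    (hs : (∑ i, L i) / 2 < s2 L + s3 L) :
    ∀ V : LTriple n, IsVertex L V → ¬ ∃ m, GammaPath L m V (mirrorT V) := by
  classical
  have hlen : 3 ≤ (sortedDesc L).length := by
    rw [sortedDesc, List.length_insertionSort, List.length_ofFn]; exact hn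
  obtain ⟨d0, d1, d2, t, hds⟩ := list_three hlen
  have hsort : List.Pairwise (· ≥ ·) (sortedDesc L) := List.pairwise_insertionSort _ _
  rw [hds] at hsort
  have h01 : d0 ≥ d1 := (List.pairwise_cons.mp hsort).1 d1 (by simp)
  have h12 : d1 ≥ d2 := (List.pairwise_cons.mp (List.pairwise_cons.mp hsort).2).1 d2 (by simp)
  have hs2 : s2 L = d1 := by rw [s2, hds]; rfl
  have hs3 : s3 L = d2 := by rw [s3, hds]; rfl
  have hms' : Finset.univ.val.map L = d0 ::ₘ d1 ::ₘ d2 ::ₘ (↑t : Multiset ℝ) := by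
    rw [Fin.univ_val_map, Multiset.coe_eq_coe.mpr (List.perm_insertionSort (· ≥ ·) _).symm]
    rw [show List.insertionSort (· ≥ ·) (List.ofFn L) = sortedDesc L from rfl, hds]
    rfl
  obtain ⟨a, haU, hLa, h2⟩ := (Multiset.map_eq_cons L _ _ _).2 hms'
  obtain ⟨b, hbU, hLb, h3⟩ := (Multiset.map_eq_cons L _ _ _).2 h2
  obtain ⟨c, hcU, hLc, -⟩ := (Multiset.map_eq_cons L _ _ _).2 h3
  have hnd : (Finset.univ : Finset (Fin n)).val.Nodup := Finset.univ.nodup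
  have hab : a ≠ b := fun h => ((hnd.mem_erase_iff.mp hbU).1 h.symm)
  have hacm : c ∈ Finset.univ.val.erase a := Multiset.erase_subset _ _ hcU
  have hac : a ≠ c := fun h => ((hnd.mem_erase_iff.mp hacm).1 h.symm)
  have hbc : b ≠ c := fun h => (((hnd.erase a).mem_erase_iff.mp hcU).1 h.symm)
  have hTbase : (∑ i, L i) / 2 < d1 + d2 := by rw [hs2, hs3] at hs; exact hs
  have hTab : (∑ i, L i) / 2 < L a + L b := by rw [hLa, hLb]; linarith
  have hTac : (∑ i, L i) / 2 < L a + L c := by rw [hLa, hLc]; linarith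
  have hTbc : (∑ i, L i) / 2 < L b + L c := by rw [hLb, hLc]; linarith
  rintro V hV ⟨m, f, h0, hm, hvert, hadj⟩
  have steps : ∀ i, i ≤ m → (Ori a b (f i) ↔ Ori a b (f 0)) := by
    intro i
    induction i with
    | zero => intro _; exact Iff.rfl
    | succ k ih =>
      intro hk1
      have hk : k ≤ m := Nat.le_of_succ_le hk1
      have hstep := ori_adj hpos hab hac hbc hTab hTac hTbc (hvert k hk) (hvert (k+1) hk1)
        (hadj k (Nat.lt_of_succ_le hk1))
      exact hstep.symm.trans (ih hk)
  have e0 : Ori a b (f 0) ↔ Ori a b V := ori_cyclEq h0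
  have em : Ori a b (f m) ↔ Ori a b (mirrorT V) := ori_cyclEq hm
  have emm : Ori a b (mirrorT V) ↔ ¬ Ori a b V := ori_mirror hpos hab hTab hV
  have echain := steps m le_rfl
  tauto
end

section
/- Let n = 5 and suppose L is generic, satisfies the triangle inequality, the sets {1, 2} and {1, 5} are long, and every two-element subset of {2, 3, 4, 5} is short. Then ({4,5}, {1}, {2,3}) and ({2,3}, {1}, {4,5}) are vertices of Γ(L), and they are joined by a path in Γ(L) of length 4. -/
open Finset

/-- (Turning a pentagon inside out.) Let `n = 5`, `L` generic with the
triangle inequality, `{1,2}` and `{1,5}` long, and every two-element subset of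
`{2,3,4,5}` short (indices `1,…,5` are `0,…,4` in `Fin 5`). Then `({4,5},{1},{2,3})`
and `({2,3},{1},{4,5})` are vertices of `Γ(L)`, joined by a path of length 4. -/
theorem pentagon_inside_out (L : Fin 5 → ℝ)
    (hpos : ∀ i, 0 < L i) (hgen : GenericVec L) (htri : TriangleIneq L)
    (h12 : LongSet L {0, 1}) (h15 : LongSet L {0, 4})
    (hshort : ∀ i j : Fin 5, i ≠ j → i ≠ 0 → j ≠ 0 → ShortSet L {i, j}) :
    IsVertex L (({3, 4}, {0}, {1, 2}) : LTriple 5) ∧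
    IsVertex L (({1, 2}, {0}, {3, 4}) : LTriple 5) ∧
    GammaPath L 4 (({3, 4}, {0}, {1, 2}) : LTriple 5) (({1, 2}, {0}, {3, 4}) : LTriple 5) := by
  -- expand the two "long" hypotheses into concrete inequalities
  have e12 : (({0,1} : Finset (Fin 5))ᶜ) = {2,3,4} := by decide
  have e15 : (({0,4} : Finset (Fin 5))ᶜ) = {1,2,3} := by decide
  simp only [LongSet, e12, e15] at h12 h15
  simp [Finset.sum_insert, Finset.mem_insert, Finset.mem_singleton] at h12 h15
  -- basic short sets
  have s0 : ShortSet L {0} := htri 0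
  have s1 : ShortSet L {1} := htri 1
  have s4 : ShortSet L {4} := htri 4
  have s12 : ShortSet L {1,2} := hshort 1 2 (by decide) (by decide) (by decide)
  have s34 : ShortSet L {3,4} := hshort 3 4 (by decide) (by decide) (by decide)
  have s23 : ShortSet L {2,3} := hshort 2 3 (by decide) (by decide) (by decide)
  have s14 : ShortSet L {1,4} := hshort 1 4 (by decide) (by decide) (by decide)
  have s123 : ShortSet L {1,2,3} := by
    have e : (({1,2,3} : Finset (Fin 5))ᶜ) = {0,4} := by decide
    simp [ShortSet, e, Finset.sum_insert, Finset.mem_insert, Finset.mem_singleton]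
    linarith
  have s234 : ShortSet L {2,3,4} := by
    have e : (({2,3,4} : Finset (Fin 5))ᶜ) = {0,1} := by decide
    simp [ShortSet, e, Finset.sum_insert, Finset.mem_insert, Finset.mem_singleton]
    linarith
  have u34 : ShortSet L ({4} ∪ {3}) := by
    have e : ({4} ∪ {3} : Finset (Fin 5)) = {3,4} := by decide
    rw [e]; exact s34
  have u14 : ShortSet L ({4} ∪ {1}) := by
    have e : ({4} ∪ {1} : Finset (Fin 5)) = {1,4} := by decide
    rw [e]; exact s14
  have u14' : ShortSet L ({1} ∪ {4}) := by
    have e : ({1} ∪ {4} : Finset (Fin 5)) = {1,4} := by decide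
    rw [e]; exact s14
  have u12 : ShortSet L ({1} ∪ {2}) := by
    have e : ({1} ∪ {2} : Finset (Fin 5)) = {1,2} := by decide
    rw [e]; exact s12
  have V0 : IsVertex L (({1,2}, {3,4}, {0}) : LTriple 5) :=
    ⟨by decide, by decide, by decide, s12, s34, s0, by decide, by decide, by decide, by decide⟩
  have V1 : IsVertex L (({1,2,3}, {4}, {0}) : LTriple 5) :=
    ⟨by decide, by decide, by decide, s123, s4, s0, by decide, by decide, by decide, by decide⟩
  have V2 : IsVertex L (({2,3}, {1,4}, {0}) : LTriple 5) :=
    ⟨by decide, by decide, by decide, s23, s14, s0, by decide, by decide, by decide, by decide⟩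
  have V3 : IsVertex L (({2,3,4}, {1}, {0}) : LTriple 5) :=
    ⟨by decide, by decide, by decide, s234, s1, s0, by decide, by decide, by decide, by decide⟩
  have V4 : IsVertex L (({3,4}, {1,2}, {0}) : LTriple 5) :=
    ⟨by decide, by decide, by decide, s34, s12, s0, by decide, by decide, by decide, by decide⟩
  refine ⟨⟨by decide, by decide, by decide, s34, s0, s12, by decide, by decide, by decide, by decide⟩,
    ⟨by decide, by decide, by decide, s12, s0, s34, by decide, by decide, by decide, by decide⟩, ?_⟩
  refine ⟨fun i => match i with
    | 0 => (({1,2}, {3,4}, {0}) : LTriple 5)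
    | 1 => (({1,2,3}, {4}, {0}) : LTriple 5)
    | 2 => (({2,3}, {1,4}, {0}) : LTriple 5)
    | 3 => (({2,3,4}, {1}, {0}) : LTriple 5)
    | _ => (({3,4}, {1,2}, {0}) : LTriple 5), ?_, ?_, ?_, ?_⟩
  · right; right; rfl
  · right; right; rfl
  · intro i hi
    interval_cases i
    · exact V0
    · exact V1
    · exact V2
    · exact V3
    · exact V4
  · intro i hi
    interval_cases i
    · exact Or.inr ⟨_, _, Or.inl rfl,
        ⟨{3}, by decide, by decide, u34, rfl⟩, Or.inl (by decide)⟩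
    · exact Or.inl ⟨_, _, Or.inl rfl,
        ⟨{1}, by decide, by decide, u14, rfl⟩, Or.inl (by decide)⟩
    · exact Or.inr ⟨_, _, Or.inl rfl,
        ⟨{4}, by decide, by decide, u14', rfl⟩, Or.inl (by decide)⟩
    · exact Or.inl ⟨_, _, Or.inl rfl,
        ⟨{2}, by decide, by decide, u12, rfl⟩, Or.inl (by decide)⟩
end

section
/- Suppose L is generic and satisfies the triangle inequality. For 1 ≤ k ≤ n let N_k denote the number of short subsets of [n] of cardinality k. Then the number of vertices of Γ(L) equals Σ_{k=1}^{n} N_k·2^{n−k} − 2·3^{n−1} + 2^n. (Equivalently, the number of ordered triples (I, J, K) of pairwise disjoint nonempty short subsets with I ∪ J ∪ K = [n] equals 3·(Σ_{k=1}^{n} N_k·2^{n−k} − 2·3^{n−1} + 2^n).) -/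
open Finset

open scoped Classical in
/-- The finset of ordered triples representing vertices of `Γ(L)`; the number of
vertices of `Γ(L)` is one third of its cardinality. -/
noncomputable def vertexTriples {n : ℕ} (L : Fin n → ℝ) : Finset (LTriple n) :=
  Finset.univ.filter (fun V => IsVertex L V)

open scoped Classical in
/-- The number of short subsets of `[n]` of cardinality `k`. -/
noncomputable def numShortSets {n : ℕ} (L : Fin n → ℝ) (k : ℕ) : ℕ :=
  (Finset.univ.filter (fun I : Finset (Fin n) => I.card = k ∧ ShortSet L I)).card

section AuxVTX
open scoped Classical

variable {n : ℕ}

noncomputable def preimT (f : Fin n → Fin 3) (j : Fin 3) : Finset (Fin n) :=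
  Finset.univ.filter (fun i => f i = j)

noncomputable def encT (V : LTriple n) : Fin n → Fin 3 :=
  fun i => if i ∈ V.1 then 0 else if i ∈ V.2.1 then 1 else 2

lemma fin3_cases : ∀ x : Fin 3, x = 0 ∨ x = 1 ∨ x = 2 := by decide

lemma short_short_compl_false {L : Fin n → ℝ} {Y : Finset (Fin n)}
    (h1 : ShortSet L Y) (h2 : ShortSet L Yᶜ) : False := by
  unfold ShortSet at h1 h2
  rw [compl_compl] at h2
  linarith

lemma long_long_disjoint_false {L : Fin n → ℝ} (hpos : ∀ i, 0 < L i)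
    {X Y : Finset (Fin n)} (hd : Disjoint X Y)
    (hX : LongSet L X) (hY : LongSet L Y) : False := by
  have hYX : Y ⊆ Xᶜ := fun i hi =>
    Finset.mem_compl.mpr (fun h => Finset.disjoint_left.mp hd h hi)
  have h1 : ∑ i ∈ Y, L i ≤ ∑ i ∈ Xᶜ, L i :=
    Finset.sum_le_sum_of_subset_of_nonneg hYX (fun i _ _ => (hpos i).le)
  have hXY : X ⊆ Yᶜ := fun i hi =>
    Finset.mem_compl.mpr (fun h => Finset.disjoint_left.mp hd hi h)
  have h2 : ∑ i ∈ X, L i ≤ ∑ i ∈ Yᶜ, L i :=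
    Finset.sum_le_sum_of_subset_of_nonneg hXY (fun i _ _ => (hpos i).le)
  unfold LongSet at hX hY
  linarith

lemma compl_of_partition {X Y : Finset (Fin n)} (hd : Disjoint X Y)
    (hu : X ∪ Y = univ) : Y = Xᶜ := by
  ext i
  simp only [Finset.mem_compl]
  constructor
  · intro hi h; exact Finset.disjoint_left.mp hd h hi
  · intro hi
    have : i ∈ X ∪ Y := hu ▸ Finset.mem_univ i
    rcases Finset.mem_union.mp this with h | h
    · exact absurd h hi
    · exact h

lemma parts_nonempty {L : Fin n → ℝ} {X Y Z : Finset (Fin n)}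
    (hXY : Disjoint X Y) (hXZ : Disjoint X Z) (hYZ : Disjoint Y Z)
    (hu : X ∪ Y ∪ Z = univ)
    (hsX : ShortSet L X) (hsY : ShortSet L Y) (hsZ : ShortSet L Z) :
    X.Nonempty ∧ Y.Nonempty ∧ Z.Nonempty := by
  refine ⟨?_, ?_, ?_⟩ <;> rw [Finset.nonempty_iff_ne_empty] <;> intro h <;> subst h
  · have hu' : Y ∪ Z = univ := by simpa using hu
    have := compl_of_partition hYZ hu'
    exact short_short_compl_false hsY (this ▸ hsZ)
  · have hu' : X ∪ Z = univ := by
      rw [Finset.union_assoc] at hu; simpa using hu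
    have := compl_of_partition hXZ hu'
    exact short_short_compl_false hsX (this ▸ hsZ)
  · have hu' : X ∪ Y = univ := by simpa using hu
    have := compl_of_partition hXY hu'
    exact short_short_compl_false hsX (this ▸ hsY)

lemma preim_disjoint (f : Fin n → Fin 3) {j j' : Fin 3} (h : j ≠ j') :
    Disjoint (preimT f j) (preimT f j') := by
  rw [Finset.disjoint_left]
  intro i hi hi'
  simp only [preimT, mem_filter] at hi hi'
  exact h (hi.2 ▸ hi'.2 ▸ rfl)

lemma preim_union (f : Fin n → Fin 3) :
    preimT f 0 ∪ preimT f 1 ∪ preimT f 2 = univ := by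
  ext i
  simp [preimT]
  exact fin3_cases (f i)

lemma enc_preim0 (V : LTriple n) : preimT (encT V) 0 = V.1 := by
  ext i
  rw [preimT, mem_filter]; simp only [encT, mem_univ, true_and]
  split_ifs with h1 h2 <;> simp [h1]

lemma enc_preim1 (V : LTriple n) (hd : Disjoint V.1 V.2.1) :
    preimT (encT V) 1 = V.2.1 := by
  ext i
  rw [preimT, mem_filter]; simp only [encT, mem_univ, true_and]
  split_ifs with h1 h2
  · simp only [show ¬((0:Fin 3) = 1) by decide, false_iff]
    exact fun h => Finset.disjoint_left.mp hd h1 h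
  · simp [h2]
  · simp only [show ¬((2:Fin 3) = 1) by decide, false_iff]
    exact h2

lemma enc_preim2 (V : LTriple n) (hd1 : Disjoint V.1 V.2.2)
    (hd2 : Disjoint V.2.1 V.2.2) (hu : V.1 ∪ V.2.1 ∪ V.2.2 = univ) :
    preimT (encT V) 2 = V.2.2 := by
  ext i
  rw [preimT, mem_filter]; simp only [encT, mem_univ, true_and]
  split_ifs with h1 h2
  · simp only [show ¬((0:Fin 3) = 2) by decide, false_iff]
    exact fun h => Finset.disjoint_left.mp hd1 h1 h
  · simp only [show ¬((1:Fin 3) = 2) by decide, false_iff]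
    exact fun h => Finset.disjoint_left.mp hd2 h2 h
  · simp only [true_iff]
    have : i ∈ V.1 ∪ V.2.1 ∪ V.2.2 := hu ▸ Finset.mem_univ i
    simp only [Finset.mem_union] at this
    tauto

lemma preim_swap (f : Fin n → Fin 3) (j : Fin 3) :
    preimT ((Equiv.swap 0 j) ∘ f) 0 = preimT f j ∧
    preimT ((Equiv.swap 0 j) ∘ f) j = preimT f 0 := by
  constructor <;> ext i <;>
    simp [preimT, Equiv.apply_eq_iff_eq_symm_apply, Equiv.symm_swap]

lemma card_short_preim (L : Fin n → ℝ) (j : Fin 3) :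
    (univ.filter (fun f : Fin n → Fin 3 => ShortSet L (preimT f j))).card =
    (univ.filter (fun f : Fin n → Fin 3 => ShortSet L (preimT f 0))).card := by
  apply Finset.card_nbij' (fun f => (Equiv.swap 0 j) ∘ f) (fun f => (Equiv.swap 0 j) ∘ f)
  · intro f hf
    simp only [mem_coe, mem_filter, mem_univ, true_and] at hf ⊢
    rw [(preim_swap f j).1]; exact hf
  · intro f hf
    simp only [mem_coe, mem_filter, mem_univ, true_and] at hf ⊢
    rw [(preim_swap f j).2]; exact hf
  · intro f _; funext i; simp [Equiv.swap_apply_self]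
  · intro f _; funext i; simp [Equiv.swap_apply_self]

lemma card_preim_fiber (S : Finset (Fin n)) :
    (univ.filter (fun f : Fin n → Fin 3 => preimT f 0 = S)).card = 2 ^ (n - S.card) := by
  have he : univ.filter (fun f : Fin n → Fin 3 => preimT f 0 = S)
      = Fintype.piFinset (fun i => if i ∈ S then ({0} : Finset (Fin 3)) else {1, 2}) := by
    ext f
    simp only [mem_filter, mem_univ, true_and, Fintype.mem_piFinset, preimT,
      Finset.ext_iff]
    constructor
    · intro h i
      have hi := h i
      split_ifs with hmem
      · simp only [Finset.mem_singleton]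
        exact hi.mpr hmem
      · have hne : ¬ f i = 0 := fun h0 => hmem (hi.mp h0)
        revert hne
        generalize f i = x
        revert x; decide
    · intro h i
      have hi := h i
      constructor
      · intro h0
        by_contra hmem
        rw [if_neg hmem] at hi
        rw [h0] at hi
        revert hi; decide
      · intro hmem
        rw [if_pos hmem] at hi
        simpa using hi
  rw [he, Fintype.card_piFinset]
  have hc : ∀ i : Fin n, (if i ∈ S then ({0} : Finset (Fin 3)) else {1, 2}).card
      = if i ∈ S then 1 else 2 := by
    intro i; split_ifs <;> decide
  rw [Finset.prod_congr rfl (fun i _ => hc i), Finset.prod_ite]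
  have h1 : univ.filter (fun i : Fin n => i ∈ S) = S := by ext; simp
  have h2 : univ.filter (fun i : Fin n => ¬ i ∈ S) = Sᶜ := by ext; simp
  rw [h1, h2, Finset.prod_const, Finset.prod_const, one_pow, one_mul,
    Finset.card_compl, Fintype.card_fin]

end AuxVTX

section MainAux
open scoped Classical

variable {n : ℕ}

lemma card_vertexTriples_eq (L : Fin n → ℝ) :
    (vertexTriples L).card =
    (univ.filter (fun f : Fin n → Fin 3 =>
      ShortSet L (preimT f 0) ∧ ShortSet L (preimT f 1) ∧ ShortSet L (preimT f 2))).card := by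
  apply Finset.card_nbij' (fun V => encT V)
    (fun f => (preimT f 0, preimT f 1, preimT f 2))
  · intro V hV
    simp only [vertexTriples, mem_coe, mem_filter, mem_univ, true_and] at hV
    obtain ⟨-, -, -, hs1, hs2, hs3, hd12, hd13, hd23, hu⟩ := hV
    simp only [mem_coe, mem_filter, mem_univ, true_and]
    rw [enc_preim0, enc_preim1 V hd12, enc_preim2 V hd13 hd23 hu]
    exact ⟨hs1, hs2, hs3⟩
  · intro f hf
    simp only [mem_coe, mem_filter, mem_univ, true_and] at hf
    simp only [vertexTriples, mem_coe, mem_filter, mem_univ, true_and]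
    have hd01 : Disjoint (preimT f 0) (preimT f 1) := preim_disjoint f (by decide)
    have hd02 : Disjoint (preimT f 0) (preimT f 2) := preim_disjoint f (by decide)
    have hd12 : Disjoint (preimT f 1) (preimT f 2) := preim_disjoint f (by decide)
    have hu := preim_union f
    obtain ⟨h1, h2, h3⟩ := parts_nonempty hd01 hd02 hd12 hu hf.1 hf.2.1 hf.2.2
    exact ⟨h1, h2, h3, hf.1, hf.2.1, hf.2.2, hd01, hd02, hd12, hu⟩
  · intro V hV
    simp only [vertexTriples, mem_coe, mem_filter, mem_univ, true_and] at hV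
    obtain ⟨-, -, -, -, -, -, hd12, hd13, hd23, hu⟩ := hV
    beta_reduce
    rw [enc_preim0, enc_preim1 V hd12, enc_preim2 V hd13 hd23 hu]
  · intro f _
    funext i
    rcases fin3_cases (f i) with h | h | h <;>
      simp [encT, preimT, h]

end MainAux

/-- If `L` is generic and satisfies the triangle inequality, then the
number of vertices of `Γ(L)` equals `∑_{k=1}^{n} N_k·2^{n−k} − 2·3^{n−1} + 2^n`;
equivalently, the number of ordered vertex triples is three times this quantity. -/
theorem num_vertices_formula (n : ℕ) (hn : 3 ≤ n) (L : Fin n → ℝ)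
    (hpos : ∀ i, 0 < L i) (hgen : GenericVec L) (htri : TriangleIneq L) :
    ((vertexTriples L).card : ℤ) =
      3 * ((∑ k ∈ Finset.Icc 1 n, (numShortSets L k : ℤ) * 2 ^ (n - k))
        - 2 * 3 ^ (n - 1) + 2 ^ n) := by
  classical
  have hcard3 : (univ : Finset (Fin n → Fin 3)).card = 3 ^ n := by
    simp [Finset.card_univ]
  have hSorL : ∀ S : Finset (Fin n), ¬ ShortSet L S ↔ LongSet L S := by
    intro S
    constructor
    · intro h
      rcases (hgen S).lt_or_gt with h' | h'
      · exact absurd h' h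
      · exact h'
    · intro h h'
      exact absurd h' (not_lt.mpr h.le)
  -- Sh j + Lo j = 3^n
  have hShLo : ∀ j : Fin 3,
      (univ.filter (fun f : Fin n → Fin 3 => ShortSet L (preimT f j))).card
      + (univ.filter (fun f : Fin n → Fin 3 => LongSet L (preimT f j))).card = 3 ^ n := by
    intro j
    have h := Finset.card_filter_add_card_filter_not
      (s := (univ : Finset (Fin n → Fin 3)))
      (p := fun f => ShortSet L (preimT f j))
    rw [hcard3] at h
    have heq : univ.filter (fun f : Fin n → Fin 3 => ¬ ShortSet L (preimT f j))
        = univ.filter (fun f : Fin n → Fin 3 => LongSet L (preimT f j)) :=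
      Finset.filter_congr (fun f _ => hSorL _)
    rw [heq] at h
    exact h
  set A : ℕ :=
    (univ.filter (fun f : Fin n → Fin 3 => ShortSet L (preimT f 0))).card with hAdef
  -- all-short functions plus longs = 3^n
  have key : (vertexTriples L).card
      + ((univ.filter (fun f : Fin n → Fin 3 => LongSet L (preimT f 0))).card
        + (univ.filter (fun f : Fin n → Fin 3 => LongSet L (preimT f 1))).card
        + (univ.filter (fun f : Fin n → Fin 3 => LongSet L (preimT f 2))).card) = 3 ^ n := by
    rw [card_vertexTriples_eq L]
    have h := Finset.card_filter_add_card_filter_not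
      (s := (univ : Finset (Fin n → Fin 3)))
      (p := fun f => LongSet L (preimT f 0) ∨ LongSet L (preimT f 1) ∨ LongSet L (preimT f 2))
    rw [hcard3] at h
    have hneg : univ.filter (fun f : Fin n → Fin 3 =>
        ¬ (LongSet L (preimT f 0) ∨ LongSet L (preimT f 1) ∨ LongSet L (preimT f 2)))
        = univ.filter (fun f : Fin n → Fin 3 =>
          ShortSet L (preimT f 0) ∧ ShortSet L (preimT f 1) ∧ ShortSet L (preimT f 2)) := by
      refine Finset.filter_congr (fun f _ => ?_)
      rw [not_or, not_or]
      simp only [← hSorL, not_not]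
    rw [hneg] at h
    have hun : univ.filter (fun f : Fin n → Fin 3 =>
        LongSet L (preimT f 0) ∨ LongSet L (preimT f 1) ∨ LongSet L (preimT f 2))
        = univ.filter (fun f : Fin n → Fin 3 => LongSet L (preimT f 0))
          ∪ (univ.filter (fun f : Fin n → Fin 3 => LongSet L (preimT f 1))
            ∪ univ.filter (fun f : Fin n → Fin 3 => LongSet L (preimT f 2))) := by
      rw [Finset.filter_or, Finset.filter_or]
    have hdLo : ∀ j j' : Fin 3, j ≠ j' →
        Disjoint (univ.filter (fun f : Fin n → Fin 3 => LongSet L (preimT f j)))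
          (univ.filter (fun f : Fin n → Fin 3 => LongSet L (preimT f j'))) := by
      intro j j' hjj'
      rw [Finset.disjoint_left]
      intro f hf hf'
      simp only [mem_filter, mem_univ, true_and] at hf hf'
      exact long_long_disjoint_false hpos (preim_disjoint f hjj') hf hf'
    have hd12 := hdLo 1 2 (by decide)
    have hd01 : Disjoint (univ.filter (fun f : Fin n → Fin 3 => LongSet L (preimT f 0)))
        (univ.filter (fun f : Fin n → Fin 3 => LongSet L (preimT f 1))
          ∪ univ.filter (fun f : Fin n → Fin 3 => LongSet L (preimT f 2))) := by
      rw [Finset.disjoint_union_right]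
      exact ⟨hdLo 0 1 (by decide), hdLo 0 2 (by decide)⟩
    rw [hun, Finset.card_union_of_disjoint hd01, Finset.card_union_of_disjoint hd12] at h
    omega
  -- compute A
  have hA : A = ∑ k ∈ Finset.range (n + 1), numShortSets L k * 2 ^ (n - k) := by
    rw [hAdef]
    rw [Finset.card_eq_sum_card_fiberwise
      (f := fun f : Fin n → Fin 3 => preimT f 0)
      (t := univ.filter (fun S : Finset (Fin n) => ShortSet L S))
      (fun f hf => by
        simp only [mem_coe, mem_filter, mem_univ, true_and] at hf ⊢
        exact hf)]
    have hfib : ∀ S ∈ univ.filter (fun S : Finset (Fin n) => ShortSet L S),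
        ((univ.filter (fun f : Fin n → Fin 3 => ShortSet L (preimT f 0))).filter
          (fun f => preimT f 0 = S)).card = 2 ^ (n - S.card) := by
      intro S hS
      simp only [mem_filter, mem_univ, true_and] at hS
      rw [Finset.filter_filter]
      have heq : univ.filter (fun f : Fin n → Fin 3 => ShortSet L (preimT f 0) ∧ preimT f 0 = S)
          = univ.filter (fun f : Fin n → Fin 3 => preimT f 0 = S) := by
        refine Finset.filter_congr (fun f _ => ?_)
        constructor
        · exact fun h => h.2
        · intro h; exact ⟨h ▸ hS, h⟩
      rw [heq, card_preim_fiber]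
    rw [Finset.sum_congr rfl hfib]
    rw [← Finset.sum_fiberwise_of_maps_to
      (g := Finset.card) (t := Finset.range (n + 1))
      (fun S _ => Finset.mem_range.mpr (Nat.lt_succ_of_le
        ((Finset.card_le_univ S).trans (by simp))))
      (fun S => 2 ^ (n - S.card))]
    refine Finset.sum_congr rfl (fun k hk => ?_)
    have hflt : ((univ.filter (fun S : Finset (Fin n) => ShortSet L S)).filter
        (fun S => S.card = k)) = univ.filter
          (fun S : Finset (Fin n) => S.card = k ∧ ShortSet L S) := by
      rw [Finset.filter_filter]
      exact Finset.filter_congr (fun S _ => and_comm)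
    calc ∑ S ∈ (univ.filter (fun S : Finset (Fin n) => ShortSet L S)).filter
            (fun S => S.card = k), 2 ^ (n - S.card)
        = ∑ _S ∈ (univ.filter (fun S : Finset (Fin n) => ShortSet L S)).filter
            (fun S => S.card = k), 2 ^ (n - k) := by
          refine Finset.sum_congr rfl (fun S hS => ?_)
          rw [Finset.mem_filter] at hS
          rw [hS.2]
      _ = numShortSets L k * 2 ^ (n - k) := by
          rw [Finset.sum_const, hflt, smul_eq_mul]
          rfl
  have hrange : Finset.range (n + 1) = insert 0 (Finset.Icc 1 n) := by
    ext k; simp; omega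
  have hN0 : numShortSets L 0 = 1 := by
    unfold numShortSets
    have heq : univ.filter (fun S : Finset (Fin n) => S.card = 0 ∧ ShortSet L S)
        = {∅} := by
      ext S
      simp only [mem_filter, mem_univ, true_and, Finset.card_eq_zero,
        Finset.mem_singleton]
      constructor
      · exact fun h => h.1
      · rintro rfl
        refine ⟨rfl, ?_⟩
        unfold ShortSet
        rw [Finset.sum_empty, Finset.compl_empty]
        apply Finset.sum_pos (fun i _ => hpos i)
        exact ⟨⟨0, by omega⟩, Finset.mem_univ _⟩
    rw [heq, Finset.card_singleton]
  have hA' : A = 2 ^ n + ∑ k ∈ Finset.Icc 1 n, numShortSets L k * 2 ^ (n - k) := by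
    rw [hA, hrange, Finset.sum_insert (by simp), hN0]
    simp
  have hc0 := hShLo 0
  have hc1 := hShLo 1
  have hc2 := hShLo 2
  have he1 := card_short_preim L 1
  have he2 := card_short_preim L 2
  rw [← hAdef] at hc0
  rw [he1, ← hAdef] at hc1
  rw [he2, ← hAdef] at hc2
  have h3n : (3 : ℤ) ^ n = 3 * 3 ^ (n - 1) := by
    have hn1 : n - 1 + 1 = n := by omega
    calc (3:ℤ) ^ n = 3 ^ (n - 1 + 1) := by rw [hn1]
    _ = 3 ^ (n - 1) * 3 := pow_succ 3 (n - 1)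
    _ = 3 * 3 ^ (n - 1) := by ring
  have hkey' : ((vertexTriples L).card : ℤ)
      + (((univ.filter (fun f : Fin n → Fin 3 => LongSet L (preimT f 0))).card : ℤ)
        + ((univ.filter (fun f : Fin n → Fin 3 => LongSet L (preimT f 1))).card : ℤ)
        + ((univ.filter (fun f : Fin n → Fin 3 => LongSet L (preimT f 2))).card : ℤ))
      = 3 ^ n := by exact_mod_cast key
  have hc0' : (A : ℤ) + ((univ.filter (fun f : Fin n → Fin 3 => LongSet L (preimT f 0))).card : ℤ) = 3 ^ n := by exact_mod_cast hc0
  have hc1' : (A : ℤ) + ((univ.filter (fun f : Fin n → Fin 3 => LongSet L (preimT f 1))).card : ℤ) = 3 ^ n := by exact_mod_cast hc1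
  have hc2' : (A : ℤ) + ((univ.filter (fun f : Fin n → Fin 3 => LongSet L (preimT f 2))).card : ℤ) = 3 ^ n := by exact_mod_cast hc2
  have hA'' : (A : ℤ) = 2 ^ n + ∑ k ∈ Finset.Icc 1 n, (numShortSets L k : ℤ) * 2 ^ (n - k) := by
    rw [hA']
    push_cast
    ring
  rw [hA''] at hc0' hc1' hc2'
  linarith [hkey', hc0', hc1', hc2', h3n]
end

section
/- If L is an n-bow, then the number of vertices of Γ(L) equals 2^{n−1} − 2. -/
open Finset

section Aux

open Finset

/-- If `{j, m}` is long and `I` avoids both `j` and `m`, then `I` is short. -/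
lemma short_of_two_notMem {n : ℕ} {L : Fin n → ℝ} (hpos : ∀ i, 0 < L i)
    {j m : Fin n} (hlong : LongSet L {j, m}) {I : Finset (Fin n)}
    (hj : j ∉ I) (hm : m ∉ I) : ShortSet L I := by
  have h1 : I ⊆ ({j, m} : Finset (Fin n))ᶜ := by
    intro x hx
    simp only [mem_compl, mem_insert, mem_singleton]
    rintro (rfl | rfl)
    · exact hj hx
    · exact hm hx
  have h2 : ({j, m} : Finset (Fin n)) ⊆ Iᶜ := by
    intro x hx
    simp only [mem_insert, mem_singleton] at hx
    rcases hx with rfl | rfl <;> simpa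
  have s1 : ∑ i ∈ I, L i ≤ ∑ i ∈ ({j, m} : Finset (Fin n))ᶜ, L i :=
    sum_le_sum_of_subset_of_nonneg h1 (fun i _ _ => (hpos i).le)
  have s2 : ∑ i ∈ ({j, m} : Finset (Fin n)), L i ≤ ∑ i ∈ Iᶜ, L i :=
    sum_le_sum_of_subset_of_nonneg h2 (fun i _ _ => (hpos i).le)
  exact lt_of_le_of_lt s1 (lt_of_lt_of_le hlong s2)

/-- If `{j, m}` is long and `I` contains both `j` and `m`, then `I` is not short. -/
lemma not_short_of_two_mem {n : ℕ} {L : Fin n → ℝ} (hpos : ∀ i, 0 < L i)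
    {j m : Fin n} (hlong : LongSet L {j, m}) {I : Finset (Fin n)}
    (hj : j ∈ I) (hm : m ∈ I) : ¬ ShortSet L I := by
  have h1 : ({j, m} : Finset (Fin n)) ⊆ I := by
    intro x hx
    simp only [mem_insert, mem_singleton] at hx
    rcases hx with rfl | rfl <;> assumption
  have h2 : Iᶜ ⊆ ({j, m} : Finset (Fin n))ᶜ := compl_subset_compl.mpr h1
  have s1 : ∑ i ∈ Iᶜ, L i ≤ ∑ i ∈ ({j, m} : Finset (Fin n))ᶜ, L i :=
    sum_le_sum_of_subset_of_nonneg h2 (fun i _ _ => (hpos i).le)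
  have s2 : ∑ i ∈ ({j, m} : Finset (Fin n)), L i ≤ ∑ i ∈ I, L i :=
    sum_le_sum_of_subset_of_nonneg h1 (fun i _ _ => (hpos i).le)
  intro hshort
  exact absurd hshort (not_lt.mpr (le_of_lt (lt_of_le_of_lt s1 (lt_of_lt_of_le hlong s2))))

lemma compl_partition {α : Type*} [Fintype α] [DecidableEq α] {A B C : Finset α}
    (dAC : Disjoint A C) (dBC : Disjoint B C) (hu : A ∪ B ∪ C = Finset.univ) :
    C = (A ∪ B)ᶜ := by
  ext x
  simp only [mem_compl, mem_union]
  constructor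
  · intro hx
    push_neg
    exact ⟨disjoint_right.mp dAC hx, disjoint_right.mp dBC hx⟩
  · intro hx
    have hx2 : x ∈ A ∪ B ∪ C := hu ▸ mem_univ x
    push_neg at hx
    simp only [mem_union] at hx2
    tauto

lemma isVertex_rot_s8 {n : ℕ} {L : Fin n → ℝ} {I J K : Finset (Fin n)}
    (h : IsVertex L (I, J, K)) : IsVertex L (K, I, J) := by
  obtain ⟨h1, h2, h3, s1, s2, s3, d12, d13, d23, hu⟩ := h
  refine ⟨h3, h1, h2, s3, s1, s2, d13.symm, d23.symm, d12, ?_⟩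
  rw [← hu]; ext x; simp only [mem_union]; tauto

end Aux

/-- If `L` is an `n`-bow, then the number of vertices of `Γ(L)` equals
`2^{n−1} − 2`; equivalently the number of ordered vertex triples is `3·(2^{n−1} − 2)`. -/
theorem bow_num_vertices (n : ℕ) (hn : 3 ≤ n) (L : Fin n → ℝ)
    (hpos : ∀ i, 0 < L i) (hgen : GenericVec L) (htri : TriangleIneq L)
    (hbow : ∀ i : Fin n, i ≠ ⟨n - 1, by omega⟩ → LongSet L {i, ⟨n - 1, by omega⟩}) :
    (vertexTriples L).card = 3 * (2 ^ (n - 1) - 2) := by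
  classical
  set m : Fin n := ⟨n - 1, by omega⟩ with hmdef
  -- a short set containing m is exactly {m}
  have key : ∀ I : Finset (Fin n), ShortSet L I → m ∈ I → I = {m} := by
    intro I hI hmI
    refine Finset.eq_singleton_iff_unique_mem.mpr ⟨hmI, ?_⟩
    intro x hx
    by_contra hne
    exact not_short_of_two_mem hpos (hbow x hne) hx hmI hI
  have hne_single : ∀ A : Finset (Fin n), m ∉ A → A ≠ {m} := by
    intro A hA h; rw [h] at hA; simp at hA
  set P : Finset (Finset (Fin n)) :=
      (Finset.univ.erase m).powerset.filter
        (fun A => A.Nonempty ∧ A ≠ Finset.univ.erase m) with hPdef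
  have hcompl_union : ∀ X : Finset (Fin n),
      (({m} : Finset (Fin n)) ∪ X)ᶜ = Finset.univ.erase m \ X := by
    intro X; ext x
    simp only [mem_compl, mem_union, mem_singleton, mem_sdiff, mem_erase, mem_univ, and_true]
    tauto
  -- vertices with first part {m}
  have base : ∀ A ∈ P, IsVertex L ({m}, A, Finset.univ.erase m \ A) := by
    intro A hA
    simp only [hPdef, mem_filter, mem_powerset] at hA
    obtain ⟨hsub, hAne, hAprop⟩ := hA
    have hmA : m ∉ A := fun h => (Finset.mem_erase.mp (hsub h)).1 rfl
    have hrest : (Finset.univ.erase m \ A).Nonempty := by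
      rw [Finset.sdiff_nonempty]
      intro hc
      exact hAprop (le_antisymm hsub hc)
    obtain ⟨j, hj⟩ := hrest
    have hjm : j ≠ m := (Finset.mem_erase.mp (Finset.mem_sdiff.mp hj).1).1
    have hjA : j ∉ A := (Finset.mem_sdiff.mp hj).2
    obtain ⟨k, hk⟩ := hAne
    have hkm : k ≠ m := (Finset.mem_erase.mp (hsub hk)).1
    refine ⟨singleton_nonempty m, ⟨k, hk⟩, ⟨j, hj⟩, htri m, ?_, ?_, ?_, ?_, ?_, ?_⟩
    · exact short_of_two_notMem hpos (hbow j hjm) hjA hmA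
    · refine short_of_two_notMem hpos (hbow k hkm) ?_ ?_
      · simp only [mem_sdiff]; tauto
      · simp only [mem_sdiff, mem_erase]; tauto
    · simpa using hmA
    · simp only [disjoint_singleton_left, mem_sdiff, mem_erase]; tauto
    · exact Finset.sdiff_disjoint.symm
    · rw [Finset.union_assoc, Finset.union_sdiff_of_subset hsub]
      ext x
      simp only [mem_union, mem_singleton, mem_erase, mem_univ, iff_true, and_true]
      tauto
  have memP : ∀ A B : Finset (Fin n), m ∉ A → A.Nonempty → Disjoint A B →
      B.Nonempty → m ∉ B → A ∈ P := by
    intro A B hmA hAne hd hBne hmB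
    simp only [hPdef, mem_filter, mem_powerset]
    refine ⟨fun x hx => Finset.mem_erase.mpr ⟨fun h => hmA (h ▸ hx), mem_univ x⟩, hAne, ?_⟩
    intro hc
    obtain ⟨b, hb⟩ := hBne
    have hbm : b ≠ m := fun h => hmB (h ▸ hb)
    have hbA : b ∉ A := Finset.disjoint_right.mp hd hb
    exact hbA (hc ▸ Finset.mem_erase.mpr ⟨hbm, mem_univ b⟩)
  -- structure of an arbitrary vertex
  have struct : ∀ V : LTriple n, IsVertex L V →
      (V.1 = {m} ∧ V.2.1 ∈ P ∧ V.2.2 = Finset.univ.erase m \ V.2.1) ∨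
      (V.1 ≠ {m} ∧ V.2.1 = {m} ∧ V.2.2 ∈ P ∧ V.1 = Finset.univ.erase m \ V.2.2) ∨
      (V.1 ≠ {m} ∧ V.2.1 ≠ {m} ∧ V.2.2 = {m} ∧ V.1 ∈ P ∧
        V.2.1 = Finset.univ.erase m \ V.1) := by
    intro V hV
    obtain ⟨h1, h2, h3, s1, s2, s3, d12, d13, d23, hu⟩ := hV
    have hm3 : V.2.2 = (V.1 ∪ V.2.1)ᶜ := compl_partition d13 d23 hu
    have hu1 : V.2.1 ∪ V.2.2 ∪ V.1 = Finset.univ := by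
      rw [← hu]; ext x; simp only [mem_union]; tauto
    have hu2 : V.2.2 ∪ V.1 ∪ V.2.1 = Finset.univ := by
      rw [← hu]; ext x; simp only [mem_union]; tauto
    have hm1 : V.1 = (V.2.1 ∪ V.2.2)ᶜ := compl_partition d12.symm d13.symm hu1
    have hm2 : V.2.1 = (V.2.2 ∪ V.1)ᶜ := compl_partition d23.symm d12 hu2
    have hmem : m ∈ V.1 ∪ V.2.1 ∪ V.2.2 := hu ▸ mem_univ m
    simp only [mem_union] at hmem
    rcases hmem with (hm1' | hm2') | hm3'
    · have e1 : V.1 = {m} := key _ s1 hm1'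
      have hnm2 : m ∉ V.2.1 := Finset.disjoint_left.mp d12 hm1'
      have hnm3 : m ∉ V.2.2 := Finset.disjoint_left.mp d13 hm1'
      left
      refine ⟨e1, memP _ _ hnm2 h2 d23 h3 hnm3, ?_⟩
      rw [hm3, e1, hcompl_union]
    · have e2 : V.2.1 = {m} := key _ s2 hm2'
      have hnm1 : m ∉ V.1 := Finset.disjoint_right.mp d12 hm2'
      have hnm3 : m ∉ V.2.2 := Finset.disjoint_left.mp d23 hm2'
      right; left
      refine ⟨hne_single _ hnm1, e2, memP _ _ hnm3 h3 d13.symm h1 hnm1, ?_⟩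
      rw [hm1, e2, hcompl_union]
    · have e3 : V.2.2 = {m} := key _ s3 hm3'
      have hnm1 : m ∉ V.1 := Finset.disjoint_right.mp d13 hm3'
      have hnm2 : m ∉ V.2.1 := Finset.disjoint_right.mp d23 hm3'
      right; right
      refine ⟨hne_single _ hnm1, hne_single _ hnm2, e3,
        memP _ _ hnm1 h1 d12 h2 hnm2, ?_⟩
      rw [hm2, e3, hcompl_union]
  -- the bijection
  have hcard : (vertexTriples L).card = ((Finset.univ : Finset (Fin 3)) ×ˢ P).card := by
    apply Finset.card_nbij'
      (i := fun V => if V.1 = {m} then ((0 : Fin 3), V.2.1)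
        else if V.2.1 = {m} then ((1 : Fin 3), V.2.2) else ((2 : Fin 3), V.1))
      (j := fun p => if p.1 = 0 then (({m} : Finset (Fin n)), p.2, Finset.univ.erase m \ p.2)
        else if p.1 = 1 then (Finset.univ.erase m \ p.2, ({m} : Finset (Fin n)), p.2)
        else (p.2, Finset.univ.erase m \ p.2, ({m} : Finset (Fin n))))
    · intro V hV
      have hV' : IsVertex L V := by
        simpa [vertexTriples, Finset.mem_filter] using hV
      rcases struct V hV' with ⟨e1, hp, _⟩ | ⟨e1, e2, hp, _⟩ | ⟨e1, e2, e3, hp, _⟩ <;>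
        simp [e1, hp, Finset.mem_product] <;> simp [e2, hp, Finset.mem_product]
    · rintro ⟨q, A⟩ hq
      have hA : A ∈ P := (Finset.mem_product.mp hq).2
      have hv1 : IsVertex L ({m}, A, Finset.univ.erase m \ A) := base A hA
      have hv2 : IsVertex L (Finset.univ.erase m \ A, {m}, A) := isVertex_rot_s8 hv1
      have hv3 : IsVertex L (A, Finset.univ.erase m \ A, {m}) := isVertex_rot_s8 hv2
      beta_reduce
      by_cases h0 : q = 0
      · rw [if_pos h0]
        simpa [vertexTriples, Finset.mem_filter] using hv1
      · rw [if_neg h0]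
        by_cases h1 : q = 1
        · rw [if_pos h1]
          simpa [vertexTriples, Finset.mem_filter] using hv2
        · rw [if_neg h1]
          simpa [vertexTriples, Finset.mem_filter] using hv3
    · intro V hV
      have hV' : IsVertex L V := by
        simpa [vertexTriples, Finset.mem_filter] using hV
      rcases struct V hV' with ⟨e1, hp, e3⟩ | ⟨e1, e2, hp, e3⟩ | ⟨e1, e2, e3, hp, e4⟩
      · simp only [e1, if_pos rfl]
        exact Prod.ext e1.symm (Prod.ext rfl e3.symm)
      · simp only [if_neg e1, e2, if_pos rfl]
        exact Prod.ext e3.symm (Prod.ext e2.symm rfl)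
      · simp only [if_neg e1, if_neg e2]
        exact Prod.ext rfl (Prod.ext e4.symm e3.symm)
    · rintro ⟨q, A⟩ hq
      have hA : A ∈ P := (Finset.mem_product.mp hq).2
      simp only [hPdef, mem_filter, mem_powerset] at hA
      obtain ⟨hsub, hAne, hAprop⟩ := hA
      have hmA : m ∉ A := fun h => (Finset.mem_erase.mp (hsub h)).1 rfl
      have hmR : m ∉ Finset.univ.erase m \ A := fun h =>
        (Finset.mem_erase.mp (Finset.mem_sdiff.mp h).1).1 rfl
      have hAne' : A ≠ {m} := hne_single _ hmA
      have hRne' : Finset.univ.erase m \ A ≠ {m} := hne_single _ hmR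
      beta_reduce
      by_cases h0 : q = 0
      · subst h0
        rw [if_pos rfl, if_pos rfl]
      · rw [if_neg h0]
        by_cases h1 : q = 1
        · subst h1
          rw [if_pos rfl, if_neg hRne', if_pos rfl]
        · rw [if_neg h1, if_neg hAne', if_neg hRne']
          have h2 : q = 2 := by fin_cases q <;> simp_all
          rw [h2]
  rw [hcard, Finset.card_product]
  have hPcard : P.card = 2 ^ (n - 1) - 2 := by
    have hsd : P = (Finset.univ.erase m).powerset \ {∅, Finset.univ.erase m} := by
      ext A
      simp only [hPdef, mem_filter, Finset.mem_sdiff, Finset.mem_insert, Finset.mem_singleton,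
        Finset.nonempty_iff_ne_empty, not_or]
    have hsub2 : ({∅, Finset.univ.erase m} : Finset (Finset (Fin n))) ⊆
        (Finset.univ.erase m).powerset := by
      intro x hx
      simp only [Finset.mem_insert, Finset.mem_singleton] at hx
      rcases hx with rfl | rfl
      · exact Finset.empty_mem_powerset _
      · exact Finset.mem_powerset_self _
    have hnemp : (Finset.univ.erase m : Finset (Fin n)) ≠ ∅ := by
      have : (Finset.univ.erase m).card = n - 1 := by
        rw [Finset.card_erase_of_mem (mem_univ m), Finset.card_univ, Fintype.card_fin]
      intro h
      rw [h, Finset.card_empty] at this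
      omega
    have hcard2 : ({∅, Finset.univ.erase m} : Finset (Finset (Fin n))).card = 2 := by
      rw [Finset.card_insert_of_notMem (by simpa using (Ne.symm hnemp)), Finset.card_singleton]
    rw [hsd, Finset.card_sdiff_of_subset hsub2, hcard2, Finset.card_powerset,
      Finset.card_erase_of_mem (mem_univ m), Finset.card_univ, Fintype.card_fin]
  rw [hPcard, Finset.card_univ, Fintype.card_fin]
end

section
/- Let L and L′ be two generic length vectors of length n, and let I ⊆ [n] with |I| = k, 1 ≤ k ≤ n−1. Assume: (a) every subset A ⊆ [n] with A ∉ {I, [n]∖I} is short for L if and only if it is short for L′; (b) I is short for L and long for L′ (hence [n]∖I is long for L and short for L′); (c) every nonempty proper subset of I and every nonempty proper subset of [n]∖I is short for both L and L′. Then (number of vertices of Γ(L′)) − (number of vertices of Γ(L)) = 2^k − 2^{n−k}. -/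
open Finset

lemma part_aux {n : ℕ} {A B C : Finset (Fin n)} (hC : C.Nonempty)
    (dAB : Disjoint A B) (dAC : Disjoint A C) (dBC : Disjoint B C)
    (hu : A ∪ B ∪ C = Finset.univ) :
    B ⊆ Aᶜ ∧ B ≠ Aᶜ ∧ C = Aᶜ \ B := by
  have hBsub : B ⊆ Aᶜ := by
    intro x hx
    simp only [Finset.mem_compl]
    exact fun hxJ => (Finset.disjoint_left.mp dAB hxJ) hx
  have hCeq : C = Aᶜ \ B := by
    ext x
    simp only [Finset.mem_sdiff, Finset.mem_compl]
    constructor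
    · intro hx
      exact ⟨fun hxJ => (Finset.disjoint_left.mp dAC hxJ) hx,
             fun hxB => (Finset.disjoint_left.mp dBC hxB) hx⟩
    · rintro ⟨hxJ, hxB⟩
      have hxu := Finset.mem_univ x
      rw [← hu] at hxu
      simp only [Finset.mem_union] at hxu
      tauto
  refine ⟨hBsub, ?_, hCeq⟩
  intro hBe
  obtain ⟨x, hx⟩ := hC
  rw [hCeq, hBe] at hx
  simp at hx

lemma mem_vertexTriples {n : ℕ} (L : Fin n → ℝ) (V : LTriple n) :
    V ∈ vertexTriples L ↔ IsVertex L V := by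
  simp [vertexTriples]

lemma diff_card {n : ℕ} (M M' : Fin n → ℝ) (J : Finset (Fin n))
    (hJne : J.Nonempty) (hJcne : Jᶜ.Nonempty)
    (ha : ∀ A : Finset (Fin n), A ≠ J → A ≠ Jᶜ → (ShortSet M A ↔ ShortSet M' A))
    (hJ' : ShortSet M' J) (hJm : ¬ ShortSet M J) (hJc' : ¬ ShortSet M' Jᶜ)
    (hsub : ∀ A : Finset (Fin n), A.Nonempty → A ⊂ Jᶜ → ShortSet M A ∧ ShortSet M' A) :
    (vertexTriples M' \ vertexTriples M).card = 3 * (2 ^ Jᶜ.card - 2) := by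
  classical
  set P : Finset (Finset (Fin n)) := Jᶜ.powerset.filter (fun B => B.Nonempty ∧ B ≠ Jᶜ) with hP
  have hmemP : ∀ B, B ∈ P ↔ B ⊆ Jᶜ ∧ B.Nonempty ∧ B ≠ Jᶜ := by
    intro B; simp [hP]
  set S1 := P.image (fun B => ((J, B, Jᶜ \ B) : LTriple n)) with hS1
  set S2 := P.image (fun B => ((B, J, Jᶜ \ B) : LTriple n)) with hS2
  set S3 := P.image (fun B => ((B, Jᶜ \ B, J) : LTriple n)) with hS3
  have key : vertexTriples M' \ vertexTriples M = S1 ∪ S2 ∪ S3 := by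
    ext V
    simp only [Finset.mem_sdiff, mem_vertexTriples, Finset.mem_union]
    constructor
    · rintro ⟨hV', hV⟩
      obtain ⟨A, B, C⟩ := V
      obtain ⟨h1, h2, h3, s1, s2, s3, d12, d13, d23, hu⟩ := hV'
      simp only at h1 h2 h3 s1 s2 s3 d12 d13 d23 hu ⊢
      have hfail : ¬ ShortSet M A ∨ ¬ ShortSet M B ∨ ¬ ShortSet M C := by
        by_contra h
        push_neg at h
        exact hV ⟨h1, h2, h3, h.1, h.2.1, h.2.2, d12, d13, d23, hu⟩
      have hXJ : ∀ X : Finset (Fin n), ShortSet M' X → ¬ ShortSet M X → X = J := by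
        intro X hs hns
        by_contra hXne
        by_cases hXc : X = Jᶜ
        · exact hJc' (hXc ▸ hs)
        · exact hns ((ha X hXne hXc).mpr hs)
      rcases hfail with hf | hf | hf
      · have hAJ : A = J := hXJ A s1 hf
        obtain ⟨hBsub, hBne, hCeq⟩ := part_aux h3 d12 d13 d23 hu
        rw [hAJ] at hBsub hBne hCeq
        refine Or.inl (Or.inl ?_)
        rw [hS1, Finset.mem_image]
        exact ⟨B, (hmemP B).mpr ⟨hBsub, h2, hBne⟩, by rw [hAJ, hCeq]⟩
      · have hBJ : B = J := hXJ B s2 hf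
        have hu2 : B ∪ A ∪ C = Finset.univ := by rw [Finset.union_comm B A]; exact hu
        obtain ⟨hAsub, hAne, hCeq⟩ := part_aux h3 d12.symm d23 d13 hu2
        rw [hBJ] at hAsub hAne hCeq
        refine Or.inl (Or.inr ?_)
        rw [hS2, Finset.mem_image]
        exact ⟨A, (hmemP A).mpr ⟨hAsub, h1, hAne⟩, by rw [hBJ, hCeq]⟩
      · have hCJ : C = J := hXJ C s3 hf
        have hu3 : C ∪ A ∪ B = Finset.univ := by
          rw [Finset.union_assoc, Finset.union_comm C (A ∪ B)]; exact hu
        obtain ⟨hAsub, hAne, hBeq⟩ := part_aux h2 d13.symm d23.symm d12 hu3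
        rw [hCJ] at hAsub hAne hBeq
        refine Or.inr ?_
        rw [hS3, Finset.mem_image]
        exact ⟨A, (hmemP A).mpr ⟨hAsub, h1, hAne⟩, by rw [hCJ, hBeq]⟩
    · intro hV
      have hbase : ∀ B : Finset (Fin n), B ∈ P →
          B.Nonempty ∧ (Jᶜ \ B).Nonempty ∧
          ShortSet M' B ∧ ShortSet M' (Jᶜ \ B) ∧ ¬ ShortSet M J ∧
          Disjoint J B ∧ Disjoint J (Jᶜ \ B) ∧ Disjoint B (Jᶜ \ B) ∧
          J ∪ B ∪ (Jᶜ \ B) = Finset.univ := by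
        intro B hB
        obtain ⟨hBsub, hBne2, hBneq⟩ := (hmemP B).mp hB
        have hBss : B ⊂ Jᶜ := _root_.ssubset_iff_subset_ne.mpr ⟨hBsub, hBneq⟩
        have hDne : (Jᶜ \ B).Nonempty := by
          rw [Finset.sdiff_nonempty]
          intro h
          exact hBneq (Finset.Subset.antisymm hBsub h)
        have hDss : Jᶜ \ B ⊂ Jᶜ := Finset.sdiff_ssubset hBsub hBne2
        refine ⟨hBne2, hDne, (hsub B hBne2 hBss).2, (hsub _ hDne hDss).2, hJm, ?_, ?_, ?_, ?_⟩
        · exact disjoint_compl_right.mono_right hBsub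
        · exact disjoint_compl_right.mono_right (Finset.sdiff_subset)
        · exact Finset.disjoint_sdiff
        · rw [Finset.union_assoc, Finset.union_sdiff_of_subset hBsub, Finset.union_compl]
      rcases hV with (hV | hV) | hV
      · rw [hS1, Finset.mem_image] at hV
        obtain ⟨B, hB, rfl⟩ := hV
        obtain ⟨b1, b2, b3, b4, b5, b6, b7, b8, b9⟩ := hbase B hB
        exact ⟨⟨hJne, b1, b2, hJ', b3, b4, b6, b7, b8, b9⟩, fun h => b5 h.2.2.2.1⟩
      · rw [hS2, Finset.mem_image] at hV
        obtain ⟨B, hB, rfl⟩ := hV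
        obtain ⟨b1, b2, b3, b4, b5, b6, b7, b8, b9⟩ := hbase B hB
        have hu2 : B ∪ J ∪ (Jᶜ \ B) = Finset.univ := by
          rw [Finset.union_comm B J]; exact b9
        exact ⟨⟨b1, hJne, b2, b3, hJ', b4, b6.symm, b8, b7, hu2⟩, fun h => b5 h.2.2.2.2.1⟩
      · rw [hS3, Finset.mem_image] at hV
        obtain ⟨B, hB, rfl⟩ := hV
        obtain ⟨b1, b2, b3, b4, b5, b6, b7, b8, b9⟩ := hbase B hB
        have hu3 : B ∪ (Jᶜ \ B) ∪ J = Finset.univ := by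
          rw [Finset.union_comm (B ∪ (Jᶜ \ B)) J, ← Finset.union_assoc]; exact b9
        exact ⟨⟨b1, b2, hJne, b3, b4, hJ', b8, b6.symm, b7.symm, hu3⟩, fun h => b5 h.2.2.2.2.2.1⟩
  have cardP : P.card = 2 ^ Jᶜ.card - 2 := by
    have hPeq : P = Jᶜ.powerset \ {∅, Jᶜ} := by
      ext B
      simp only [hP, Finset.mem_filter, Finset.mem_powerset, Finset.mem_sdiff,
        Finset.mem_insert, Finset.mem_singleton, Finset.nonempty_iff_ne_empty]
      tauto
    have hsubP : ({∅, Jᶜ} : Finset (Finset (Fin n))) ⊆ Jᶜ.powerset := by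
      intro B hB
      simp only [Finset.mem_insert, Finset.mem_singleton] at hB
      rcases hB with rfl | rfl <;> simp
    rw [hPeq, Finset.card_sdiff_of_subset hsubP, Finset.card_powerset,
      Finset.card_insert_of_notMem (by simp [Ne.symm hJcne.ne_empty]), Finset.card_singleton]
  have c1 : S1.card = P.card := Finset.card_image_of_injOn (fun B₁ _ B₂ _ h => by
    simpa using congrArg (fun V : LTriple n => V.2.1) h)
  have c2 : S2.card = P.card := Finset.card_image_of_injOn (fun B₁ _ B₂ _ h => by
    simpa using congrArg (fun V : LTriple n => V.1) h)
  have c3 : S3.card = P.card := Finset.card_image_of_injOn (fun B₁ _ B₂ _ h => by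
    simpa using congrArg (fun V : LTriple n => V.1) h)
  have hJnotsub : ∀ B' : Finset (Fin n), B' ∈ P → ¬ (J = B') := by
    intro B' hB' h
    obtain ⟨x, hx⟩ := hJne
    have := ((hmemP B').mp hB').1 (h ▸ hx)
    simp only [Finset.mem_compl] at this
    exact this hx
  have d12 : Disjoint S1 S2 := by
    rw [Finset.disjoint_left]
    rintro V hV1 hV2
    rw [hS1, Finset.mem_image] at hV1
    rw [hS2, Finset.mem_image] at hV2
    obtain ⟨B, hB, rfl⟩ := hV1
    obtain ⟨B', hB', hEq⟩ := hV2
    exact hJnotsub B' hB' (congrArg (fun V : LTriple n => V.1) hEq).symm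
  have d13 : Disjoint S1 S3 := by
    rw [Finset.disjoint_left]
    rintro V hV1 hV2
    rw [hS1, Finset.mem_image] at hV1
    rw [hS3, Finset.mem_image] at hV2
    obtain ⟨B, hB, rfl⟩ := hV1
    obtain ⟨B', hB', hEq⟩ := hV2
    exact hJnotsub B' hB' (congrArg (fun V : LTriple n => V.1) hEq).symm
  have d23 : Disjoint S2 S3 := by
    rw [Finset.disjoint_left]
    rintro V hV1 hV2
    rw [hS2, Finset.mem_image] at hV1
    rw [hS3, Finset.mem_image] at hV2
    obtain ⟨B, hB, rfl⟩ := hV1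
    obtain ⟨B', hB', hEq⟩ := hV2
    have h2 : Jᶜ \ B' = J := congrArg (fun V : LTriple n => V.2.1) hEq
    obtain ⟨x, hx⟩ := hJne
    have : x ∈ Jᶜ \ B' := by rw [h2]; exact hx
    simp only [Finset.mem_sdiff, Finset.mem_compl] at this
    exact this.1 hx
  rw [key, Finset.card_union_of_disjoint (Finset.disjoint_union_left.mpr ⟨d13, d23⟩),
    Finset.card_union_of_disjoint d12, c1, c2, c3, cardP]
  ring

/-- (Crossing a wall.) Let `L`, `L'` be generic length vectors,
`I ⊆ [n]` with `1 ≤ |I| ≤ n−1`. If (a) every subset other than `I` and its complement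
is short for `L` iff it is short for `L'`; (b) `I` is short for `L` and long for `L'`;
(c) every nonempty proper subset of `I` and of `[n]∖I` is short for both; then the
number of vertices of `Γ(L')` minus that of `Γ(L)` equals `2^{|I|} − 2^{n−|I|}`
(equivalently, three times that for the ordered triples). -/
theorem wall_crossing_vertex_count (n : ℕ) (hn : 3 ≤ n) (L L' : Fin n → ℝ)
    (hpos : ∀ i, 0 < L i) (hpos' : ∀ i, 0 < L' i)
    (hgen : GenericVec L) (hgen' : GenericVec L')
    (I : Finset (Fin n)) (hk1 : 1 ≤ I.card) (hk2 : I.card ≤ n - 1)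
    (ha : ∀ A : Finset (Fin n), A ≠ I → A ≠ Iᶜ → (ShortSet L A ↔ ShortSet L' A))
    (hb : ShortSet L I) (hb' : LongSet L' I)
    (hc : ∀ A : Finset (Fin n), A.Nonempty → A ⊂ I → ShortSet L A ∧ ShortSet L' A)
    (hc' : ∀ A : Finset (Fin n), A.Nonempty → A ⊂ Iᶜ → ShortSet L A ∧ ShortSet L' A) :
    ((vertexTriples L').card : ℤ) - ((vertexTriples L).card : ℤ) =
      3 * (2 ^ I.card - 2 ^ (n - I.card)) := by
  classical
  have hIne : I.Nonempty := Finset.card_pos.mp hk1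
  have hIccard : Iᶜ.card = n - I.card := by
    rw [Finset.card_compl, Fintype.card_fin]
  have hIcne : Iᶜ.Nonempty := Finset.card_pos.mp (by rw [hIccard]; omega)
  have hshortL'Ic : ShortSet L' Iᶜ := by
    unfold ShortSet; rw [compl_compl]; exact hb'
  have hnotLIc : ¬ ShortSet L Iᶜ := by
    intro h
    unfold ShortSet at h
    rw [compl_compl] at h
    exact lt_asymm hb h
  have hnotL'I : ¬ ShortSet L' I := fun h => lt_asymm hb' h
  have h1 : (vertexTriples L' \ vertexTriples L).card = 3 * (2 ^ I.card - 2) := by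
    have := diff_card L L' Iᶜ hIcne (by simpa using hIne)
      (fun A hA1 hA2 => ha A (by simpa using hA2) hA1)
      hshortL'Ic hnotLIc (by simpa using hnotL'I)
      (fun A hA hA2 => hc A hA (by simpa using hA2))
    simpa using this
  have h2 : (vertexTriples L \ vertexTriples L').card = 3 * (2 ^ (n - I.card) - 2) := by
    have := diff_card L' L I hIne hIcne
      (fun A hA1 hA2 => (ha A hA1 hA2).symm)
      hb hnotL'I hnotLIc (fun A h1 h2 => (hc' A h1 h2).symm)
    rwa [hIccard] at this
  have e1 := Finset.card_sdiff_add_card_inter (vertexTriples L') (vertexTriples L)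
  have e2 := Finset.card_sdiff_add_card_inter (vertexTriples L) (vertexTriples L')
  rw [Finset.inter_comm] at e2
  have hp1 : (2 : ℕ) ≤ 2 ^ I.card := by
    calc (2:ℕ) = 2 ^ 1 := rfl
    _ ≤ 2 ^ I.card := Nat.pow_le_pow_right (by norm_num) hk1
  have hp2 : (2 : ℕ) ≤ 2 ^ (n - I.card) := by
    calc (2:ℕ) = 2 ^ 1 := rfl
    _ ≤ 2 ^ (n - I.card) := Nat.pow_le_pow_right (by norm_num) (by omega)
  have : ((vertexTriples L').card : ℤ) - ((vertexTriples L).card : ℤ) =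
      ((vertexTriples L' \ vertexTriples L).card : ℤ) -
      ((vertexTriples L \ vertexTriples L').card : ℤ) := by
    rw [← e1, ← e2]; push_cast; ring
  rw [this, h1, h2]
  push_cast [Nat.cast_sub hp1, Nat.cast_sub hp2]
  ring
end
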